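/- Let n ≥ 3, 0 ≤ α ≤ π/2, and t := 1/sin α. If t > n^{3/2}, then Σ_{i=0}^{n−2} C(n−2,i) · n^{i/2} · I_{n,n−2−i}(α) < 3/t, where I_{n,k}(α) := ∫_0^α cos(ρ)^k sin(ρ)^{n−2−k} dρ. -/

import Mathlib

set_option maxHeartbeats 1000000


open Real Finset

/-- Let `n ≥ 3`, `0 ≤ α ≤ π/2`, and `t := 1/sin α`.  If `t > n^{3/2}`, then
`Σ_{i=0}^{n−2} C(n−2,i) · n^{i/2} · I_{n,n−2−i}(α) < 3/t`, where
`I_{n,k}(α) := ∫_0^α cos(ρ)^k sin(ρ)^{n−2−k} dρ`. -/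
theorem sum_binom_I_bound (n : ℕ) (hn : 3 ≤ n) (α : ℝ) (hα0 : 0 ≤ α) (hα1 : α ≤ π / 2)
    (t : ℝ) (ht : t = 1 / Real.sin α) (htn : t > (n : ℝ) ^ ((3 : ℝ) / 2)) :
    ∑ i ∈ range (n - 1), ((n - 2).choose i : ℝ) * (n : ℝ) ^ ((i : ℝ) / 2) *
        ∫ ρ in (0)..α, Real.cos ρ ^ (n - 2 - i) * Real.sin ρ ^ i
      < 3 / t := by
  have hpi := Real.pi_pos
  set s : ℝ := Real.sin α with hsdef
  have hnpos : (0:ℝ) < (n:ℝ) := by exact_mod_cast (by omega : 0 < n)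
  have ht0 : 0 < t := lt_trans (Real.rpow_pos_of_pos hnpos _) htn
  have hs0 : 0 ≤ s := Real.sin_nonneg_of_nonneg_of_le_pi hα0 (by linarith)
  have hspos : 0 < s := by
    rcases lt_or_eq_of_le hs0 with h | h
    · exact h
    · exfalso; rw [ht, ← h] at ht0; simp at ht0
  have hcos0 : 0 ≤ Real.cos α := Real.cos_nonneg_of_mem_Icc ⟨by linarith, hα1⟩
  -- sin ρ ≤ s and 0 ≤ cos ρ ≤ 1 on [0, α]
  have hsinle : ∀ ρ ∈ Set.Icc 0 α, Real.sin ρ ≤ s := by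
    intro ρ hρ
    rcases lt_or_eq_of_le hρ.2 with h | h
    · exact le_of_lt (Real.strictMonoOn_sin ⟨by linarith [hρ.1], by linarith [hρ.2]⟩
        ⟨by linarith, hα1⟩ h)
    · rw [h]
  have hsinnn : ∀ ρ ∈ Set.Icc 0 α, 0 ≤ Real.sin ρ := fun ρ hρ =>
    Real.sin_nonneg_of_nonneg_of_le_pi hρ.1 (by linarith [hρ.2])
  have hcosnn : ∀ ρ ∈ Set.Icc 0 α, 0 ≤ Real.cos ρ := fun ρ hρ =>
    Real.cos_nonneg_of_mem_Icc ⟨by linarith [hρ.1], by linarith [hρ.2]⟩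
  -- key pointwise estimate on each integral
  have hint : ∀ i, i ≤ n - 2 → (∫ ρ in (0)..α, Real.cos ρ ^ (n - 2 - i) * Real.sin ρ ^ i)
      ≤ s ^ i * s := by
    intro i hi
    by_cases hcase : i = n - 2
    · -- integrand is sin^(n-2); bound by s^(n-3) * sin ρ
      subst hcase
      have hsub : n - 2 - (n - 2) = 0 := by omega
      rw [hsub]
      have h1 : (∫ ρ in (0)..α, Real.cos ρ ^ 0 * Real.sin ρ ^ (n - 2))
          ≤ ∫ ρ in (0)..α, s ^ (n - 3) * Real.sin ρ := by
        apply intervalIntegral.integral_mono_on hα0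
        · exact (Continuous.intervalIntegrable (by continuity) 0 α)
        · exact (Continuous.intervalIntegrable (by continuity) 0 α)
        · intro ρ hρ
          have h2 : Real.sin ρ ^ (n - 2) = Real.sin ρ ^ (n - 3) * Real.sin ρ := by
            rw [← pow_succ]; congr 1; omega
          rw [pow_zero, one_mul, h2]
          exact mul_le_mul_of_nonneg_right
            (pow_le_pow_left₀ (hsinnn ρ hρ) (hsinle ρ hρ) _)
            (hsinnn ρ hρ)
      rw [intervalIntegral.integral_const_mul, integral_sin, Real.cos_zero] at h1
      have h3 : 1 - Real.cos α ≤ s * s := by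
        have := Real.sin_sq_add_cos_sq α
        nlinarith [Real.cos_le_one α]
      have h4 : s ^ (n - 3) * (1 - Real.cos α) ≤ s ^ (n - 2) * s := by
        have h5 : s ^ (n - 2) = s ^ (n - 3) * s := by
          rw [← pow_succ]; congr 1; omega
        rw [h5, mul_assoc]
        exact mul_le_mul_of_nonneg_left h3 (pow_nonneg hs0 _)
      linarith
    · -- i < n - 2, so cos appears with exponent ≥ 1
      have hlt : 1 ≤ n - 2 - i := by omega
      have h1 : (∫ ρ in (0)..α, Real.cos ρ ^ (n - 2 - i) * Real.sin ρ ^ i)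
          ≤ ∫ ρ in (0)..α, s ^ i * Real.cos ρ := by
        apply intervalIntegral.integral_mono_on hα0
        · exact (Continuous.intervalIntegrable (by continuity) 0 α)
        · exact (Continuous.intervalIntegrable (by continuity) 0 α)
        · intro ρ hρ
          have hc1 : Real.cos ρ ≤ 1 := Real.cos_le_one ρ
          have hc : Real.cos ρ ^ (n - 2 - i) ≤ Real.cos ρ := by
            calc Real.cos ρ ^ (n - 2 - i) ≤ Real.cos ρ ^ 1 :=
                  pow_le_pow_of_le_one (hcosnn ρ hρ) hc1 hlt
              _ = Real.cos ρ := pow_one _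
          have hsle : Real.sin ρ ^ i ≤ s ^ i :=
            pow_le_pow_left₀ (hsinnn ρ hρ) (hsinle ρ hρ) _
          calc Real.cos ρ ^ (n - 2 - i) * Real.sin ρ ^ i
              ≤ Real.cos ρ * Real.sin ρ ^ i :=
                mul_le_mul_of_nonneg_right hc (pow_nonneg (hsinnn ρ hρ) _)
            _ ≤ Real.cos ρ * s ^ i :=
                mul_le_mul_of_nonneg_left hsle (hcosnn ρ hρ)
            _ = s ^ i * Real.cos ρ := mul_comm _ _
      rw [intervalIntegral.integral_const_mul, integral_cos, Real.sin_zero, sub_zero] at h1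
      exact h1
  -- rewrite n^(i/2) as (n^(1/2))^i
  set q : ℝ := (n:ℝ) ^ ((1:ℝ)/2) with hqdef
  have hq0 : 0 ≤ q := Real.rpow_nonneg (le_of_lt hnpos) _
  have hpow : ∀ i : ℕ, (n : ℝ) ^ ((i : ℝ) / 2) = q ^ i := by
    intro i
    rw [hqdef, ← Real.rpow_natCast ((n:ℝ) ^ ((1:ℝ)/2)) i, ← Real.rpow_mul (le_of_lt hnpos)]
    norm_num
    ring_nf
  -- q * s < 1 / n
  have hqs : q * s < 1 / (n:ℝ) := by
    have hts : s * t = 1 := by rw [ht]; field_simp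
    have hs_eq : s = 1 / t := by field_simp at hts ⊢; linarith [hts]
    rw [hs_eq, mul_one_div, div_lt_div_iff₀ ht0 hnpos]
    have : q * (n:ℝ) = (n:ℝ) ^ ((3:ℝ)/2) := by
      rw [hqdef]
      nth_rewrite 2 [← Real.rpow_one (n:ℝ)]
      rw [← Real.rpow_add hnpos]
      norm_num
    rw [this]
    linarith [htn]
  -- sum bound
  have hsum : ∑ i ∈ range (n - 1), ((n - 2).choose i : ℝ) * (n : ℝ) ^ ((i : ℝ) / 2) *
        (∫ ρ in (0)..α, Real.cos ρ ^ (n - 2 - i) * Real.sin ρ ^ i)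
      ≤ s * (q * s + 1) ^ (n - 2) := by
    have h1 : ∑ i ∈ range (n - 1), ((n - 2).choose i : ℝ) * (n : ℝ) ^ ((i : ℝ) / 2) *
          (∫ ρ in (0)..α, Real.cos ρ ^ (n - 2 - i) * Real.sin ρ ^ i)
        ≤ ∑ i ∈ range (n - 1), ((n - 2).choose i : ℝ) * (n : ℝ) ^ ((i : ℝ) / 2) *
          (s ^ i * s) := by
      apply Finset.sum_le_sum
      intro i hi
      have hi' : i ≤ n - 2 := by
        have := Finset.mem_range.mp hi; omega
      exact mul_le_mul_of_nonneg_left (hint i hi')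
        (mul_nonneg (Nat.cast_nonneg _) (Real.rpow_nonneg (le_of_lt hnpos) _))
    have h2 : ∑ i ∈ range (n - 1), ((n - 2).choose i : ℝ) * (n : ℝ) ^ ((i : ℝ) / 2) *
          (s ^ i * s) = s * (q * s + 1) ^ (n - 2) := by
      rw [add_pow, Finset.mul_sum]
      have hrange : n - 1 = n - 2 + 1 := by omega
      rw [hrange]
      apply Finset.sum_congr rfl
      intro i _
      rw [hpow i, one_pow, mul_pow]
      ring
    linarith
  -- (q*s + 1)^(n-2) < 3
  have hlt3 : (q * s + 1) ^ (n - 2) < 3 := by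
    have hb : (0:ℝ) ≤ q * s + 1 := by positivity
    have h1 : (q * s + 1) ^ (n - 2) < (1 / (n:ℝ) + 1) ^ (n - 2) :=
      pow_lt_pow_left₀ (by linarith) hb (by omega)
    have hone : (1:ℝ) ≤ 1 / (n:ℝ) + 1 := by
      have h : (0:ℝ) ≤ 1 / (n:ℝ) := by positivity
      linarith
    have h2 : (1 / (n:ℝ) + 1) ^ (n - 2) ≤ (1 / (n:ℝ) + 1) ^ n :=
      pow_le_pow_right₀ hone (by omega)
    have h3 : (1 / (n:ℝ) + 1) ^ n ≤ Real.exp (1 / (n:ℝ)) ^ n :=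
      pow_le_pow_left₀ (by positivity) (Real.add_one_le_exp _) _
    have h4 : Real.exp (1 / (n:ℝ)) ^ n = Real.exp ((n:ℝ) * (1 / (n:ℝ))) := by
      rw [Real.exp_nat_mul]
    have h5 : (n:ℝ) * (1 / (n:ℝ)) = 1 := by field_simp
    have h6 : Real.exp 1 < 3 := by linarith [Real.exp_one_lt_d9]
    rw [h5] at h4
    linarith
  have hfinal : s * (q * s + 1) ^ (n - 2) < 3 / t := by
    have h3t : 3 / t = 3 * s := by
      rw [ht]; field_simp
    rw [h3t]
    nlinarith [hlt3, hspos]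
  linarith
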